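/- Let f : {0,1}^n → {0,1} and let E be a set of decreasing edges of f that forms a matching, i.e., no two edges in E share an endpoint. Then every monotone function g : {0,1}^n → {0,1} differs from f on at least |E| points of {0,1}^n; consequently, dist(f, Mono) ≥ |E|/2^n. -/

import Mathlib

open Finset

attribute [local instance] Classical.propDecidable

variable {n : ℕ}

/-- The edge of the hypercube along dimension `i` at `x` (the pair
`{x^{(i→0)}, x^{(i→1)}}`) is decreasing for `f`. -/
def decEdge (f : (Fin n → Bool) → Bool) (x : Fin n → Bool) (i : Fin n) : Prop :=
  f (Function.update x i false) = true ∧ f (Function.update x i true) = false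

/-- `x` with its `i`-th coordinate flipped. -/
def flipC (x : Fin n → Bool) (i : Fin n) : Fin n → Bool := Function.update x i (!(x i))

/-- `g` is monotone. -/
def monoB (g : (Fin n → Bool) → Bool) : Prop :=
  ∀ x y : Fin n → Bool, (∀ i, x i ≤ y i) → g x ≤ g y

/-- Distance of `f` to the set of monotone functions. -/
noncomputable def distMono (f : (Fin n → Bool) → Bool) : ℝ :=
  sInf {d : ℝ | ∃ g : (Fin n → Bool) → Bool, monoB g ∧
    d = ((univ.filter fun x => f x ≠ g x).card : ℝ) / 2 ^ n}

/-- `I_f⁻(x)`: the number of decreasing edges of `f` incident on `x`. -/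
noncomputable def Iminus (f : (Fin n → Bool) → Bool) (x : Fin n → Bool) : ℕ :=
  (univ.filter fun i => decEdge f x i).card

/-- The number of decreasing edges of `f` (each edge represented by its lower
endpoint together with its dimension). -/
noncomputable def numDecEdges (f : (Fin n → Bool) → Bool) : ℕ :=
  (univ.filter fun q : (Fin n → Bool) × Fin n => q.1 q.2 = false ∧ decEdge f q.1 q.2).card

/-- The event Capture(x, S, f). -/
def Capture (f : (Fin n → Bool) → Bool) (S : Finset (Fin n)) (x : Fin n → Bool) : Prop :=
  ∃ i ∈ S, decEdge f x i ∧ ∀ j ∈ S \ {i}, ¬ decEdge f (flipC x i) j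

/-- Hamming weight of `x` restricted to the coordinates in `M`. -/
noncomputable def wt (M : Finset (Fin n)) (x : Fin n → Bool) : ℕ :=
  (M.filter fun i => x i = true).card

/-- `g` is unate. -/
def unate (g : (Fin n → Bool) → Bool) : Prop :=
  ∃ σ : Fin n → Bool, monoB (fun x => g (fun i => xor (x i) (σ i)))

/-- Distance of `f` to the set of unate functions. -/
noncomputable def distUnate (f : (Fin n → Bool) → Bool) : ℝ :=
  sInf {d : ℝ | ∃ g : (Fin n → Bool) → Bool, unate g ∧
    d = ((univ.filter fun x => f x ≠ g x).card : ℝ) / 2 ^ n}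

/-- `g` is a `k`-junta. -/
def isJunta (k : ℕ) (g : (Fin n → Bool) → Bool) : Prop :=
  ∃ J : Finset (Fin n), J.card ≤ k ∧
    ∀ x y : Fin n → Bool, (∀ i ∈ J, x i = y i) → g x = g y

/-- Distance of `f` to the set of `k`-juntas. -/
noncomputable def distJunta (k : ℕ) (f : (Fin n → Bool) → Bool) : ℝ :=
  sInf {d : ℝ | ∃ g : (Fin n → Bool) → Bool, isJunta k g ∧
    d = ((univ.filter fun x => f x ≠ g x).card : ℝ) / 2 ^ n}

/-- `I⁻_{f,red}(x)` for the coloring `col` (an edge is identified by its lower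
endpoint along its dimension; `col e i = true` means the edge along dimension `i`
at `e` is red). -/
noncomputable def IredCol (f : (Fin n → Bool) → Bool)
    (col : (Fin n → Bool) → Fin n → Bool) (x : Fin n → Bool) : ℕ :=
  if f x = true then
    (univ.filter fun i => decEdge f x i ∧ col (Function.update x i false) i = true).card
  else 0

/-- `I⁻_{f,blue}(x)` for the coloring `col`. -/
noncomputable def IblueCol (f : (Fin n → Bool) → Bool)
    (col : (Fin n → Bool) → Fin n → Bool) (x : Fin n → Bool) : ℕ :=
  if f x = false then
    (univ.filter fun i => decEdge f x i ∧ col (Function.update x i false) i = false).card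
  else 0

/-- `Ψ_M`: the middle layer of the subcube `{0,1}^M`. -/
noncomputable def PsiSet (M : Finset (Fin n)) : Finset (↥M → Bool) :=
  univ.filter fun z => (univ.filter fun i : ↥M => z i = true).card = n / 4

/-- `x` is an erased point (for parameter `κ` and control set `M`). -/
def ErasedPt (κ : ℝ) (M : Finset (Fin n)) (x : Fin n → Bool) : Prop :=
  wt M x = n / 4 ∧ |(wt Mᶜ x : ℝ) - (n : ℝ) / 4| ≤ (n : ℝ) ^ κ

/-- `Maj(x_{M̄})`: majority on the coordinates outside `M`. -/
noncomputable def MajBar (M : Finset (Fin n)) (x : Fin n → Bool) : Bool :=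
  decide (n / 4 < wt Mᶜ x)

/-- `F` is a completion of the `D⁻` instance determined by `(M, P)`. -/
def DminusCompletion (κ : ℝ) (M : Finset (Fin n)) (P : Finset (↥M → Bool))
    (F : (Fin n → Bool) → Bool) : Prop :=
  (∀ x, wt M x < n / 4 → F x = false) ∧
  (∀ x, n / 4 < wt M x → F x = true) ∧
  (∀ x, wt M x = n / 4 → ¬ ErasedPt κ M x →
    F x = if (fun i : ↥M => x i.1) ∈ P then MajBar M x else !(MajBar M x))

/-- The function `F` of Statement 12: `F(x) = 1` iff `|x_M| > n/4`, or
`|x_M| = n/4` and `x_M ∉ P`. -/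
noncomputable def DplusF (M : Finset (Fin n)) (P : Finset (↥M → Bool))
    (x : Fin n → Bool) : Bool :=
  if n / 4 < wt M x then true
  else if wt M x = n / 4 ∧ (fun i : ↥M => x i.1) ∉ P then true
  else false

/-- if `E` is a matching of decreasing edges of `f`, then every
monotone `g` differs from `f` on at least `|E|` points, hence
`dist(f, Mono) ≥ |E|/2^n`. Edges are represented as pairs `(x, i)`, the edge
being `{x, x^{(i)}}` along dimension `i`. -/
theorem stmt1 (n : ℕ) (f : (Fin n → Bool) → Bool)
    (E : Finset ((Fin n → Bool) × Fin n))
    (hdec : ∀ e ∈ E, decEdge f e.1 e.2)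
    (hmatch : ∀ e ∈ E, ∀ e' ∈ E, e ≠ e' →
      ({e.1, flipC e.1 e.2} : Finset (Fin n → Bool)) ∩ {e'.1, flipC e'.1 e'.2} = ∅) :
    (∀ g : (Fin n → Bool) → Bool, monoB g →
      (E.card : ℝ) ≤ ((univ.filter fun x => f x ≠ g x).card : ℝ)) ∧
    (E.card : ℝ) / 2 ^ n ≤ distMono f := by
  have key : ∀ g : (Fin n → Bool) → Bool, monoB g → ∀ e ∈ E,
      ∃ y, y ∈ ({e.1, flipC e.1 e.2} : Finset (Fin n → Bool)) ∧ f y ≠ g y := by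
    intro g hg e he
    obtain ⟨h0, h1⟩ := hdec e he
    by_contra hcon
    push_neg at hcon
    have hle : g (Function.update e.1 e.2 false) ≤ g (Function.update e.1 e.2 true) := by
      apply hg
      intro j
      by_cases hj : j = e.2
      · subst hj; simp
      · simp [Function.update_of_ne hj]
    have e0 : Function.update e.1 e.2 (e.1 e.2) = e.1 := Function.update_eq_self _ _
    have hpair : Function.update e.1 e.2 false ∈ ({e.1, flipC e.1 e.2} : Finset (Fin n → Bool))
        ∧ Function.update e.1 e.2 true ∈ ({e.1, flipC e.1 e.2} : Finset (Fin n → Bool)) := by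
      rcases Bool.eq_false_or_eq_true (e.1 e.2) with hx | hx
      · rw [hx] at e0
        have hf : flipC e.1 e.2 = Function.update e.1 e.2 false := by
          simp only [flipC, hx, Bool.not_true]
        constructor
        · rw [← hf]; exact Finset.mem_insert_of_mem (Finset.mem_singleton_self _)
        · rw [e0]; exact Finset.mem_insert_self _ _
      · rw [hx] at e0
        have hf : flipC e.1 e.2 = Function.update e.1 e.2 true := by
          simp only [flipC, hx, Bool.not_false]
        constructor
        · rw [e0]; exact Finset.mem_insert_self _ _
        · rw [← hf]; exact Finset.mem_insert_of_mem (Finset.mem_singleton_self _)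
    have g0 := hcon _ hpair.1
    have g1 := hcon _ hpair.2
    rw [← g0, h0, ← g1, h1] at hle
    exact absurd hle (by simp)
  have main : ∀ g : (Fin n → Bool) → Bool, monoB g →
      E.card ≤ (univ.filter fun x => f x ≠ g x).card := by
    intro g hg
    set T := (univ.filter fun x => f x ≠ g x) with hT
    classical
    set p : (Fin n → Bool) × Fin n → (Fin n → Bool) :=
      fun e => if h : e ∈ E then (key g hg e h).choose else e.1 with hp
    have hmem : ∀ e (he : e ∈ E),
        p e ∈ ({e.1, flipC e.1 e.2} : Finset (Fin n → Bool)) ∧ f (p e) ≠ g (p e) := by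
      intro e he
      simp only [hp, dif_pos he]
      exact (key g hg e he).choose_spec
    apply Finset.card_le_card_of_injOn p
    · intro e he
      simp only [hT, Finset.mem_coe, Finset.mem_filter, Finset.mem_univ, true_and]
      exact (hmem e he).2
    · intro e he e' he' hpe
      by_contra hne
      have h1 : p e ∈ ({e.1, flipC e.1 e.2} : Finset (Fin n → Bool)) ∩
          {e'.1, flipC e'.1 e'.2} := by
        rw [Finset.mem_inter]
        exact ⟨(hmem e he).1, hpe ▸ (hmem e' he').1⟩
      rw [hmatch e he e' he' hne] at h1
      simp at h1
  refine ⟨fun g hg => by exact_mod_cast main g hg, ?_⟩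
  unfold distMono
  apply le_csInf
  · exact ⟨_, (fun _ => true), fun x y _ => le_rfl, rfl⟩
  · rintro d ⟨g, hg, rfl⟩
    gcongr
    exact_mod_cast main g hg
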